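/- Suppose x > 0 satisfies (x / (5 · 11^{1/15}))^{15² − 15/2 − 2} ≤ 128 · (π/12)⁴ · 5² · 11^{2/15}. Then x ≤ 6.1. In particular, a totally real quadratic field whose discriminant satisfies this inequality with r = 15 must have discriminant 5. -/
import Mathlib


open Real

lemma aux_root15 {c : ℝ} (hc : 0 < c) (h : (11 : ℝ) < c ^ 15) :
    (11 : ℝ) ^ ((1 : ℝ) / 15) < c := by
  have h1 : (11 : ℝ) ^ ((1 : ℝ) / 15) < (c ^ 15) ^ ((1 : ℝ) / 15) :=
    Real.rpow_lt_rpow (by norm_num) h (by norm_num)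
  calc (11 : ℝ) ^ ((1 : ℝ) / 15) < (c ^ 15) ^ ((1 : ℝ) / 15) := h1
    _ = c := by
        rw [← Real.rpow_natCast c 15, ← Real.rpow_mul hc.le]
        norm_num

lemma aux_root15' {c : ℝ} (hc : 0 < c) (h : (121 : ℝ) < c ^ 15) :
    (11 : ℝ) ^ ((2 : ℝ) / 15) < c := by
  have h1 : (11 : ℝ) ^ ((2 : ℝ) / 15) = (121 : ℝ) ^ ((1 : ℝ) / 15) := by
    rw [show ((2 : ℝ) / 15) = 2 * (1 / 15) by norm_num,
      Real.rpow_mul (by norm_num : (0:ℝ) ≤ 11)]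
    norm_num
  rw [h1]
  have h2 : (121 : ℝ) ^ ((1 : ℝ) / 15) < (c ^ 15) ^ ((1 : ℝ) / 15) :=
    Real.rpow_lt_rpow (by norm_num) h (by norm_num)
  calc (121 : ℝ) ^ ((1 : ℝ) / 15) < (c ^ 15) ^ ((1 : ℝ) / 15) := h2
    _ = c := by
        rw [← Real.rpow_natCast c 15, ← Real.rpow_mul hc.le]
        norm_num

/-- If `x > 0` satisfies `(x/(5·11^{1/15}))^{15²−15/2−2} ≤ 128·(π/12)⁴·5²·11^{2/15}`,
then `x ≤ 6.1`.  In particular a totally real quadratic field whose discriminant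
satisfies this inequality (with `r = 15`) must have discriminant 5. -/
theorem stmt_15 (x : ℝ) (hx : 0 < x)
    (h : (x / (5 * (11 : ℝ) ^ ((1 : ℝ) / 15))) ^ ((15 : ℝ) ^ 2 - 15 / 2 - 2) ≤
      128 * (π / 12) ^ 4 * 5 ^ 2 * (11 : ℝ) ^ ((2 : ℝ) / 15)) :
    x ≤ 6.1 := by
  by_contra hc
  push_neg at hc
  -- bounds on the roots of 11
  have hA : (11 : ℝ) ^ ((1 : ℝ) / 15) < 1.18 := by
    apply aux_root15 (by norm_num)
    norm_num
  have hApos : (0 : ℝ) < (11 : ℝ) ^ ((1 : ℝ) / 15) :=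
    Real.rpow_pos_of_pos (by norm_num) _
  have hB : (11 : ℝ) ^ ((2 : ℝ) / 15) < 1.3924 := by
    apply aux_root15' (by norm_num)
    norm_num
  have hBpos : (0 : ℝ) < (11 : ℝ) ^ ((2 : ℝ) / 15) :=
    Real.rpow_pos_of_pos (by norm_num) _
  -- bound on π
  have hπ : π < 3.15 := Real.pi_lt_d2
  have hπ4 : (π / 12) ^ 4 ≤ (3.15 / 12) ^ 4 := by
    apply pow_le_pow_left₀ (by positivity) (by linarith)
  -- the right-hand side is less than 22
  have hRHS : 128 * (π / 12) ^ 4 * 5 ^ 2 * (11 : ℝ) ^ ((2 : ℝ) / 15) < 22 := by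
    have h1 : 128 * (π / 12) ^ 4 * 5 ^ 2 * (11 : ℝ) ^ ((2 : ℝ) / 15)
        ≤ 128 * (3.15 / 12) ^ 4 * 5 ^ 2 * (11 : ℝ) ^ ((2 : ℝ) / 15) := by
      have : (0:ℝ) ≤ 128 * 5 ^ 2 * (11 : ℝ) ^ ((2 : ℝ) / 15) := by positivity
      nlinarith [hπ4, hBpos]
    have h2 : 128 * (3.15 / 12 : ℝ) ^ 4 * 5 ^ 2 * (11 : ℝ) ^ ((2 : ℝ) / 15)
        < 128 * (3.15 / 12) ^ 4 * 5 ^ 2 * 1.3924 := by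
      nlinarith [hB]
    nlinarith
  -- the base
  set b : ℝ := x / (5 * (11 : ℝ) ^ ((1 : ℝ) / 15)) with hbdef
  have hDpos : (0 : ℝ) < 5 * (11 : ℝ) ^ ((1 : ℝ) / 15) := by positivity
  have hb : (61 : ℝ) / 59 < b := by
    rw [hbdef, lt_div_iff₀ hDpos]
    nlinarith [hA, hApos]
  have hb1 : (1 : ℝ) < b := by linarith [hb]
  -- exponent bound
  have he : (215 : ℝ) ≤ (15 : ℝ) ^ 2 - 15 / 2 - 2 := by norm_num
  have hmono : b ^ (215 : ℝ) ≤ b ^ ((15 : ℝ) ^ 2 - 15 / 2 - 2) :=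
    (Real.rpow_le_rpow_left_iff hb1).mpr he
  have hcast : b ^ (215 : ℝ) = b ^ (215 : ℕ) := by
    rw [← Real.rpow_natCast b 215]; norm_num
  have hlow : (22 : ℝ) < b ^ (215 : ℕ) := by
    calc (22 : ℝ) < ((61 : ℝ) / 59) ^ (215 : ℕ) := by norm_num
      _ < b ^ (215 : ℕ) := by
          apply pow_lt_pow_left₀ hb (by norm_num)
          norm_num
  rw [hcast] at hmono
  linarith [h, hmono, hlow, hRHS]
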